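/- Let G be a group with finite symmetric generating set X equipped with a linear order, and order the words over X by the induced shortlex ordering (shorter words precede longer ones; words of equal length are compared lexicographically). Let W be the set of words over X that are shortlex-least among all words representing the same element of G. Let R be a binary relation on words over X satisfying: (D1) if R(u,v) then u and v represent the same element of G; (D2) if u, v ∈ W, x is a letter of X or the empty word, and ux represents the same element as v, then R(ux, v); (D3) if R(u,v) then R(wu, wv) for every word w, and if moreover |u| = |v| then R(wuw', wvw') for all words w, w'. Let L be a set of words over X satisfying: (i) L is closed under taking prefixes; (ii) W ⊆ L; (iii) if R(u,v) and |u| = |v| then u ∈ L ↔ v ∈ L; (iv) if R(u,v) and |u| > |v| then u ∉ L. Then L = Geo(G,X). -/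
import Mathlib


/-- `pre_{k-1}`, `suf_{k-1}` and `sub_k` agree: the equivalence `∼_k` on words. -/
def SimK {A : Type*} (k : ℕ) (u v : List A) : Prop :=
  u.take (k - 1) = v.take (k - 1) ∧
  u.drop (u.length - (k - 1)) = v.drop (v.length - (k - 1)) ∧
  ∀ s : List A, s.length = k → (s <:+: u ↔ s <:+: v)

/-- A language `L` is `k`-locally testable if membership is invariant under `∼_k`. -/
def LocallyTestable {A : Type*} (k : ℕ) (L : Set (List A)) : Prop :=
  ∀ u v : List A, SimK k u v → (u ∈ L ↔ v ∈ L)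

/-- The syntactic congruence of a language: `u ∼_L v` iff `sut ∈ L ↔ svt ∈ L` for all `s, t`. -/
def SynCong {A : Type*} (L : Set (List A)) (u v : List A) : Prop :=
  ∀ s t : List A, s ++ u ++ t ∈ L ↔ s ++ v ++ t ∈ L

/-- The element of `G` represented by a word over the generating set `X`. -/
def wordProd {G : Type*} [Group G] {X : Set G} (w : List X) : G :=
  (w.map Subtype.val).prod

/-- A word over `X` is geodesic if no word representing the same element is shorter. -/
def IsGeodesic {G : Type*} [Group G] (X : Set G) (w : List X) : Prop :=
  ∀ v : List X, wordProd v = wordProd w → w.length ≤ v.length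

/-- The language of all geodesic words over `X`. -/
def Geo {G : Type*} [Group G] (X : Set G) : Set (List X) :=
  {w | IsGeodesic X w}

/-- The `j`-th power of a word in the free monoid (concatenation of `j` copies). -/
def listPow {A : Type*} (w : List A) : ℕ → List A
  | 0 => []
  | n + 1 => w ++ listPow w n

/-- The shortlex order on words: shorter words come first, and words of equal length
are compared lexicographically. -/
def ShortLexLt {A : Type*} [LinearOrder A] (u v : List A) : Prop :=
  u.length < v.length ∨ (u.length = v.length ∧ List.Lex (· < ·) u v)


section StmtAux

variable {G : Type*} [Group G] {X : Set G}

lemma wordProd_append' (u v : List X) :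
    wordProd (u ++ v) = wordProd u * wordProd v := by
  simp [wordProd]

lemma geodesic_prefix' {u v : List X} (h : IsGeodesic X (u ++ v)) : IsGeodesic X u := by
  intro u' hu'
  have := h (u' ++ v) (by rw [wordProd_append', wordProd_append', hu'])
  simp only [List.length_append] at this
  omega

lemma exists_slx_min' [LinearOrder X] (hfin : X.Finite) (u : List X) :
    ∃ w : List X, wordProd w = wordProd u ∧
      ∀ v : List X, wordProd v = wordProd w → w = v ∨ ShortLexLt w v := by
  classical
  have : Finite X := hfin.to_subtype
  have hp : ∃ n, ∃ v : List X, wordProd v = wordProd u ∧ v.length = n :=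
    ⟨u.length, u, rfl, rfl⟩
  set m := Nat.find hp with hm
  obtain ⟨v0, hv0, hv0len⟩ := Nat.find_spec hp
  have hmle : ∀ v : List X, wordProd v = wordProd u → m ≤ v.length := by
    intro v hv
    exact Nat.find_min' hp ⟨v, hv, rfl⟩
  set T : Set (List X) := {v : List X | wordProd v = wordProd u ∧ v.length = m} with hT
  have hTfin : T.Finite := by
    refine (List.finite_length_eq (↥X) m).subset ?_
    intro v hv; exact hv.2
  have hTne : T.Nonempty := ⟨v0, hv0, hv0len⟩
  obtain ⟨w, hwT, hwmin⟩ := Set.exists_min_image T id hTfin hTne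
  refine ⟨w, hwT.1, ?_⟩
  intro v hv
  have hvu : wordProd v = wordProd u := by rw [hv, hwT.1]
  rcases Nat.lt_or_ge m v.length with hlt | hge
  · exact Or.inr (Or.inl (hwT.2 ▸ hlt))
  · have hveq : v.length = m := le_antisymm hge (hmle v hvu)
    have hvT : v ∈ T := ⟨hvu, hveq⟩
    have hle : w ≤ v := hwmin v hvT
    rcases eq_or_lt_of_le hle with heq | hlt
    · exact Or.inl heq
    · exact Or.inr (Or.inr ⟨hwT.2.trans hveq.symm, hlt⟩)

end StmtAux

/-- Word acceptor correctness criterion: if `W` is the set of shortlex-least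
representative words, `R` is a relation on words satisfying (D1)–(D3), and `L` is a
set of words satisfying (i)–(iv), then `L` is exactly the set of geodesic words. -/
theorem stmt12 {G : Type*} [Group G] (X : Set G) [LinearOrder X]
    (hfin : X.Finite) (hsym : ∀ x ∈ X, x⁻¹ ∈ X) (hgen : Subgroup.closure X = ⊤)
    (W : Set (List X))
    (hW : W = {w : List X | ∀ v : List X, wordProd v = wordProd w →
      w = v ∨ ShortLexLt w v})
    (R : List X → List X → Prop)
    (hD1 : ∀ u v : List X, R u v → wordProd u = wordProd v)
    (hD2 : ∀ u v : List X, u ∈ W → v ∈ W → ∀ x : List X, x.length ≤ 1 →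
      wordProd (u ++ x) = wordProd v → R (u ++ x) v)
    (hD3a : ∀ u v : List X, R u v → ∀ w : List X, R (w ++ u) (w ++ v))
    (hD3b : ∀ u v : List X, R u v → u.length = v.length →
      ∀ w w' : List X, R (w ++ u ++ w') (w ++ v ++ w'))
    (L : Set (List X))
    (hi : ∀ u v : List X, u ++ v ∈ L → u ∈ L)
    (hii : W ⊆ L)
    (hiii : ∀ u v : List X, R u v → u.length = v.length → (u ∈ L ↔ v ∈ L))
    (hiv : ∀ u v : List X, R u v → v.length < u.length → u ∉ L) :
    L = Geo X := by
  subst hW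
  -- W-membership implies geodesic-minimality
  have Wlen : ∀ w : List X, (∀ v : List X, wordProd v = wordProd w →
      w = v ∨ ShortLexLt w v) → ∀ v : List X, wordProd v = wordProd w →
      w.length ≤ v.length := by
    intro w hw v hv
    rcases hw v hv with rfl | h
    · exact le_rfl
    · rcases h with h | ⟨h, _⟩
      · exact h.le
      · exact h.le
  -- the chain lemma
  have chain : ∀ u : List X, IsGeodesic X u → ∀ w : List X,
      (∀ v : List X, wordProd v = wordProd w → w = v ∨ ShortLexLt w v) →
      wordProd w = wordProd u → ∀ s : List X, (u ++ s ∈ L ↔ w ++ s ∈ L) := by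
    intro u
    induction u using List.reverseRecOn with
    | nil =>
      intro _ w hwW hwu s
      have hw0 : w = [] := by
        rcases hwW [] (by simpa using hwu.symm) with h | h
        · exact h
        · rcases h with h | ⟨h, _⟩
          · simp at h
          · exact List.length_eq_zero_iff.mp h
      subst hw0; rfl
    | append_singleton u' x ih =>
      intro hgeo w hwW hwu s
      have hgeo' : IsGeodesic X u' := geodesic_prefix' hgeo
      obtain ⟨w', hw'u, hw'W⟩ := exists_slx_min' hfin u'
      have hw'len : w'.length = u'.length :=
        le_antisymm (Wlen w' hw'W u' hw'u.symm) (hgeo' w' hw'u)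
      have hwlen : w.length = u'.length + 1 := by
        have h1 : w.length ≤ (u' ++ [x]).length :=
          Wlen w hwW (u' ++ [x]) hwu.symm
        have h2 : (u' ++ [x]).length ≤ w.length := hgeo w hwu
        simp only [List.length_append, List.length_singleton] at h1 h2
        omega
      have hprod : wordProd (w' ++ [x]) = wordProd w := by
        rw [wordProd_append', hw'u, ← wordProd_append', hwu]
      have hR : R (w' ++ [x]) w := hD2 w' w hw'W hwW [x] (by simp) hprod
      have hRs : R ((w' ++ [x]) ++ s) (w ++ s) := by
        have := hD3b (w' ++ [x]) w hR
          (by simp only [List.length_append, List.length_singleton, hw'len, hwlen]) [] s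
        simpa using this
      have h1 : (u' ++ [x]) ++ s ∈ L ↔ w' ++ ([x] ++ s) ∈ L := by
        rw [List.append_assoc]
        exact ih hgeo' w' hw'W hw'u ([x] ++ s)
      have h2 : w' ++ ([x] ++ s) ∈ L ↔ w ++ s ∈ L := by
        rw [← List.append_assoc]
        exact hiii _ _ hRs (by simp only [List.length_append, List.length_singleton, hw'len, hwlen]; try omega)
      exact h1.trans h2
  ext u
  simp only [Geo, Set.mem_setOf_eq]
  constructor
  · -- L ⊆ Geo, by strong induction on length
    have main : ∀ n : ℕ, ∀ u : List X, u.length = n → u ∈ L → IsGeodesic X u := by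
      intro n
      induction n using Nat.strong_induction_on with
      | _ n ihn =>
        intro u hlen huL
        rcases u.eq_nil_or_concat' with rfl | ⟨u', x, rfl⟩
        · intro v _; simp
        · have hu'L : u' ∈ L := hi u' [x] huL
          have hu'len : u'.length < n := by
            simp only [← hlen, List.length_append, List.length_singleton]; omega
          have hgeo' : IsGeodesic X u' := ihn u'.length hu'len u' rfl hu'L
          obtain ⟨w', hw'u, hw'W⟩ := exists_slx_min' hfin u'
          obtain ⟨w, hwu, hwW⟩ := exists_slx_min' hfin (u' ++ [x])
          have hw'len : w'.length = u'.length :=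
            le_antisymm (Wlen w' hw'W u' hw'u.symm) (hgeo' w' hw'u)
          have hprod : wordProd (w' ++ [x]) = wordProd w := by
            rw [wordProd_append', hw'u, ← wordProd_append', hwu]
          have hR : R (w' ++ [x]) w := hD2 w' w hw'W hwW [x] (by simp) hprod
          have hmem : w' ++ [x] ∈ L := by
            have := chain u' hgeo' w' hw'W hw'u [x]
            exact this.mp huL
          have hwlong : ¬ w.length < (w' ++ [x]).length := by
            intro hcon
            exact hiv _ _ hR hcon hmem
          intro v hv
          have : w.length ≤ v.length := Wlen w hwW v (by rw [hv, hwu])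
          simp only [List.length_append, List.length_singleton] at *
          omega
    exact main u.length u rfl
  · -- Geo ⊆ L
    intro hgeo
    obtain ⟨w, hwu, hwW⟩ := exists_slx_min' hfin u
    have := chain u hgeo w hwW hwu []
    simp only [List.append_nil] at this
    exact this.mpr (hii hwW)
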